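/- Let X, Y belong to the same location-scale family: Q_X(t) = σ_X G⁻¹(t) + μ_X and Q_Y(t) = σ_Y G⁻¹(t) + μ_Y with σ_Y > σ_X > 0 and μ_X ≥ μ_Y, where G⁻¹ is a quantile function. Let H be a differentiable distortion with H' > 0. Then ∫_0^u Q_X dH ≥ ∫_0^u Q_Y dH for all u ∈ [0,1] if and only if ∫_0^1 G⁻¹(t) dH(t) ≤ (μ_X − μ_Y)/(σ_Y − σ_X). -/
import Mathlib


open Set intervalIntegral

/-- For members of a common location-scale family with `σ_Y > σ_X` and `μ_X ≥ μ_Y`,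
`H`-distorted stochastic dominance reduces to a comparison of the distorted expectation
of the standardized member with the threshold `(μ_X − μ_Y)/(σ_Y − σ_X)`. -/
theorem stmt_13 (Ginv : ℝ → ℝ) (hG : MonotoneOn Ginv (Icc 0 1))
    (μX μY σX σY : ℝ) (hσ : 0 < σX) (hσσ : σX < σY) (hμ : μY ≤ μX)
    (H : ℝ → ℝ) (hHdiff : Differentiable ℝ H)
    (hH0 : H 0 = 0) (hH1 : H 1 = 1) (hH' : ∀ t ∈ Icc (0:ℝ) 1, 0 < deriv H t)
    (hint : IntervalIntegrable (fun t => Ginv t * deriv H t) MeasureTheory.volume 0 1)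
    (hint' : IntervalIntegrable (deriv H) MeasureTheory.volume 0 1) :
    (∀ u ∈ Icc (0:ℝ) 1,
        ∫ t in (0:ℝ)..u, (σX * Ginv t + μX) * deriv H t ≥
          ∫ t in (0:ℝ)..u, (σY * Ginv t + μY) * deriv H t)
      ↔ ∫ t in (0:ℝ)..1, Ginv t * deriv H t ≤ (μX - μY) / (σY - σX) := by
  have hs0 : 0 < σY - σX := sub_pos.2 hσσ
  have hm0 : 0 ≤ μX - μY := sub_nonneg.2 hμ
  set c : ℝ := (μX - μY) / (σY - σX) with hc
  -- abbreviations
  set A : ℝ → ℝ := fun u => ∫ t in (0:ℝ)..u, Ginv t * deriv H t with hA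
  set B : ℝ → ℝ := fun u => ∫ t in (0:ℝ)..u, deriv H t with hB
  -- integrability on subintervals
  have hsub : ∀ u v : ℝ, u ∈ Icc (0:ℝ) 1 → v ∈ Icc (0:ℝ) 1 →
      uIcc u v ⊆ uIcc (0:ℝ) 1 := by
    intro u v hu hv
    rw [uIcc_of_le (zero_le_one)]
    exact uIcc_subset_Icc hu hv
  have hIG : ∀ u v : ℝ, u ∈ Icc (0:ℝ) 1 → v ∈ Icc (0:ℝ) 1 →
      IntervalIntegrable (fun t => Ginv t * deriv H t) MeasureTheory.volume u v :=
    fun u v hu hv => hint.mono_set (hsub u v hu hv)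
  have hIH : ∀ u v : ℝ, u ∈ Icc (0:ℝ) 1 → v ∈ Icc (0:ℝ) 1 →
      IntervalIntegrable (deriv H) MeasureTheory.volume u v :=
    fun u v hu hv => hint'.mono_set (hsub u v hu hv)
  have h0m : (0:ℝ) ∈ Icc (0:ℝ) 1 := by constructor <;> norm_num
  have h1m : (1:ℝ) ∈ Icc (0:ℝ) 1 := by constructor <;> norm_num
  -- B 1 = 1
  have hB1 : B 1 = 1 := by
    have := intervalIntegral.integral_deriv_eq_sub
      (f := H) (a := (0:ℝ)) (b := 1) (fun x _ => hHdiff x) hint'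
    simp only [hB]
    rw [this, hH1, hH0]; ring
  -- expansion
  have expand : ∀ (a b u : ℝ), u ∈ Icc (0:ℝ) 1 →
      ∫ t in (0:ℝ)..u, (a * Ginv t + b) * deriv H t = a * A u + b * B u := by
    intro a b u hu
    have key : ∀ t : ℝ, (a * Ginv t + b) * deriv H t
        = a * (Ginv t * deriv H t) + b * deriv H t := fun t => by ring
    simp only [key]
    rw [intervalIntegral.integral_add ((hIG 0 u h0m hu).const_mul a)
        ((hIH 0 u h0m hu).const_mul b),
      intervalIntegral.integral_const_mul, intervalIntegral.integral_const_mul]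
  -- the per-u equivalence
  have equiv : ∀ u ∈ Icc (0:ℝ) 1,
      ((∫ t in (0:ℝ)..u, (σX * Ginv t + μX) * deriv H t ≥
        ∫ t in (0:ℝ)..u, (σY * Ginv t + μY) * deriv H t) ↔ A u ≤ c * B u) := by
    intro u hu
    rw [expand σX μX u hu, expand σY μY u hu, ge_iff_le, hc, div_mul_eq_mul_div,
      le_div_iff₀ hs0]
    constructor <;> intro h <;> nlinarith
  constructor
  · intro h
    have h1 := (equiv 1 h1m).1 (h 1 h1m)
    rw [hB1, mul_one] at h1
    exact h1
  · intro h1 u hu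
    rw [equiv u hu]
    by_cases hle : Ginv u ≤ c
    · -- integrand c - Ginv nonneg on [0,u]
      have hnn : 0 ≤ ∫ t in (0:ℝ)..u, (c - Ginv t) * deriv H t := by
        apply intervalIntegral.integral_nonneg hu.1
        intro t ht
        have htm : t ∈ Icc (0:ℝ) 1 := ⟨ht.1, ht.2.trans hu.2⟩
        have : Ginv t ≤ Ginv u := hG htm hu ht.2
        exact mul_nonneg (by linarith) (hH' t htm).le
      have hexp : ∫ t in (0:ℝ)..u, (c - Ginv t) * deriv H t = c * B u - A u := by
        have key : ∀ t : ℝ, (c - Ginv t) * deriv H t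
            = c * deriv H t - Ginv t * deriv H t := fun t => by ring
        simp only [key]
        rw [intervalIntegral.integral_sub ((hIH 0 u h0m hu).const_mul c)
            (hIG 0 u h0m hu), intervalIntegral.integral_const_mul]
      linarith [hexp ▸ hnn]
    · push_neg at hle
      have hnn : 0 ≤ ∫ t in u..1, (Ginv t - c) * deriv H t := by
        apply intervalIntegral.integral_nonneg hu.2
        intro t ht
        have htm : t ∈ Icc (0:ℝ) 1 := ⟨hu.1.trans ht.1, ht.2⟩
        have : Ginv u ≤ Ginv t := hG hu htm ht.1
        exact mul_nonneg (by linarith) (hH' t htm).le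
      set I : ℝ := ∫ t in u..1, Ginv t * deriv H t with hI
      set J : ℝ := ∫ t in u..1, deriv H t with hJ
      have hexp : ∫ t in u..1, (Ginv t - c) * deriv H t = I - c * J := by
        have key : ∀ t : ℝ, (Ginv t - c) * deriv H t
            = Ginv t * deriv H t - c * deriv H t := fun t => by ring
        simp only [key]
        rw [intervalIntegral.integral_sub (hIG u 1 hu h1m)
            ((hIH u 1 hu h1m).const_mul c), intervalIntegral.integral_const_mul]
      have hadjA : A u + I = A 1 :=
        intervalIntegral.integral_add_adjacent_intervals (hIG 0 u h0m hu) (hIG u 1 hu h1m)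
      have hadjB : B u + J = B 1 :=
        intervalIntegral.integral_add_adjacent_intervals (hIH 0 u h0m hu) (hIH u 1 hu h1m)
      have h5 : c * B u = c - c * J := by rw [show B u = 1 - J by linarith [hB1 ▸ hadjB]]; ring
      have h6 : c * J ≤ I := by linarith [hexp ▸ hnn]
      linarith
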